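/- arXiv:1511.06020 — 2 statements merged into one kernel-verified Lean document; each statement's English description precedes it below -/
import Mathlib

section
/- Let {A_n} be a sequence of n×n complex matrices of vanishing mean variation whose entries are uniformly bounded in modulus by 1. Then for any fixed integers ν_1, …, ν_p and h_1, …, h_p, one has Σ_{j=0}^{n} a_{h_1; ν_1+j}(n) · a_{h_2; ν_2+j}(n) ⋯ a_{h_p; ν_p+j}(n) = Σ_{j=0}^{n} a_{h_1; j}(n) · a_{h_2; j}(n) ⋯ a_{h_p; j}(n) + o(n) as n → ∞. -/
open Filter Asymptotics Matrix

/-- The `j`-th entry of the `k`-th diagonal of an `n × n` complex matrix: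
`a_{k;j} = A_{j, j+k}` for `k ≥ 0` and `a_{k;j} = A_{j+|k|, j}` for `k < 0`,
with the convention that out-of-range entries are `0`. -/
def diagEntry {n : ℕ} (A : Matrix (Fin n) (Fin n) ℂ) (k j : ℤ) : ℂ :=
  if hk : 0 ≤ k then
    if hj : 0 ≤ j ∧ j + k < (n : ℤ) then
      A ⟨j.toNat, by omega⟩ ⟨(j + k).toNat, by omega⟩
    else 0
  else
    if hj : 0 ≤ j ∧ j - k < (n : ℤ) then
      A ⟨(j - k).toNat, by omega⟩ ⟨j.toNat, by omega⟩
    else 0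

lemma diagEntry_norm_le {n : ℕ} {A : Matrix (Fin n) (Fin n) ℂ}
    (hA : ∀ i j : Fin n, ‖A i j‖ ≤ 1) (k j : ℤ) : ‖diagEntry A k j‖ ≤ 1 := by
  unfold diagEntry
  rcases le_or_gt 0 k with hk | hk
  · rw [dif_pos hk]
    by_cases hj : 0 ≤ j ∧ j + k < (n : ℤ)
    · rw [dif_pos hj]; exact hA _ _
    · rw [dif_neg hj]; simp
  · rw [dif_neg (not_le.2 hk)]
    by_cases hj : 0 ≤ j ∧ j - k < (n : ℤ)
    · rw [dif_pos hj]; exact hA _ _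
    · rw [dif_neg hj]; simp

lemma diagEntry_eq_zero {n : ℕ} (A : Matrix (Fin n) (Fin n) ℂ) {k j : ℤ}
    (hj : ¬ (0 ≤ j ∧ j + (k.natAbs : ℤ) < (n : ℤ))) : diagEntry A k j = 0 := by
  unfold diagEntry
  rcases le_or_gt 0 k with hk | hk
  · rw [dif_pos hk, dif_neg (by omega)]
  · rw [dif_neg (not_le.2 hk), dif_neg (by omega)]

lemma sum_insert_le' {s : Finset ℤ} {f : ℤ → ℝ} (hf : ∀ x, 0 ≤ f x) (a : ℤ) :
    ∑ x ∈ insert a s, f x ≤ f a + ∑ x ∈ s, f x := by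
  by_cases h : a ∈ s
  · rw [Finset.insert_eq_self.2 h]
    have := hf a; linarith
  · rw [Finset.sum_insert h]

lemma norm_prod_sub_prod_le {ι : Type*} (s : Finset ι) (b c : ι → ℂ)
    (hb : ∀ i, ‖b i‖ ≤ 1) (hc : ∀ i, ‖c i‖ ≤ 1) :
    ‖(∏ i ∈ s, b i) - ∏ i ∈ s, c i‖ ≤ ∑ i ∈ s, ‖b i - c i‖ := by
  induction s using Finset.cons_induction with
  | empty => simp
  | cons a s ha ih =>
    rw [Finset.prod_cons, Finset.prod_cons, Finset.sum_cons]
    have hrw : b a * ∏ i ∈ s, b i - c a * ∏ i ∈ s, c i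
        = (b a - c a) * ∏ i ∈ s, b i + c a * ((∏ i ∈ s, b i) - ∏ i ∈ s, c i) := by ring
    rw [hrw]
    have hpb : ‖∏ i ∈ s, b i‖ ≤ 1 := by
      rw [norm_prod]
      exact Finset.prod_le_one (fun i _ => norm_nonneg _) (fun i _ => hb i)
    calc ‖(b a - c a) * ∏ i ∈ s, b i + c a * ((∏ i ∈ s, b i) - ∏ i ∈ s, c i)‖
        ≤ ‖(b a - c a) * ∏ i ∈ s, b i‖ + ‖c a * ((∏ i ∈ s, b i) - ∏ i ∈ s, c i)‖ :=
          norm_add_le _ _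
      _ ≤ ‖b a - c a‖ * 1 + 1 * ‖(∏ i ∈ s, b i) - ∏ i ∈ s, c i‖ := by
          rw [norm_mul, norm_mul]
          exact add_le_add (mul_le_mul_of_nonneg_left hpb (norm_nonneg _))
            (mul_le_mul_of_nonneg_right (hc a) (norm_nonneg _))
      _ ≤ ‖b a - c a‖ + ∑ i ∈ s, ‖b i - c i‖ := by
          rw [mul_one, one_mul]
          exact add_le_add_right ih _

lemma telescope_norm_le (f : ℤ → ℂ) (j : ℤ) (N : ℕ) :
    ‖f (j + N) - f j‖ ≤ ∑ t ∈ Finset.range N, ‖f (j + t + 1) - f (j + t)‖ := by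
  have h := Finset.sum_range_sub (f := fun t : ℕ => f (j + t)) N
  have h2 : f (j + N) - f j = ∑ t ∈ Finset.range N, (f (j + t + 1) - f (j + t)) := by
    rw [show (∑ t ∈ Finset.range N, (f (j + t + 1) - f (j + t)))
        = ∑ t ∈ Finset.range N, (f (j + (t + 1 : ℕ)) - f (j + t)) from
      Finset.sum_congr rfl (fun t _ => by push_cast; ring_nf), h]
    simp
  rw [h2]
  exact norm_sum_le _ _

lemma step_sum_le {n : ℕ} {A : Matrix (Fin n) (Fin n) ℂ}
    (hA : ∀ i j : Fin n, ‖A i j‖ ≤ 1) (k m : ℤ) :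
    ∑ j ∈ Finset.range (n + 1), ‖diagEntry A k ((j : ℤ) + m + 1) - diagEntry A k ((j : ℤ) + m)‖
      ≤ (∑ j ∈ Finset.range (n - k.natAbs - 1),
          ‖diagEntry A k ((j : ℤ) + 1) - diagEntry A k (j : ℤ)‖) + 4 := by
  set Δ : ℤ → ℝ := fun s => ‖diagEntry A k (s + 1) - diagEntry A k s‖ with hΔdef
  set L : ℤ := (n : ℤ) - k.natAbs with hLdef
  have hΔnn : ∀ s, 0 ≤ Δ s := fun s => norm_nonneg _
  have hΔ2 : ∀ s, Δ s ≤ 2 := by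
    intro s
    calc Δ s ≤ ‖diagEntry A k (s + 1)‖ + ‖diagEntry A k s‖ := norm_sub_le _ _
      _ ≤ 1 + 1 := add_le_add (diagEntry_norm_le hA _ _) (diagEntry_norm_le hA _ _)
      _ = 2 := by norm_num
  have hΔ0 : ∀ s : ℤ, ¬(-1 ≤ s ∧ s ≤ L - 1) → Δ s = 0 := by
    intro s hs
    have h1 : diagEntry A k (s + 1) = 0 := diagEntry_eq_zero A (by omega)
    have h2 : diagEntry A k s = 0 := diagEntry_eq_zero A (by omega)
    simp [hΔdef, h1, h2]
  have hinj : Set.InjOn (fun j : ℕ => (j : ℤ) + m) (Finset.range (n + 1)) := by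
    intro a _ b _ hab; simpa using hab
  have h1 : ∑ j ∈ Finset.range (n + 1), Δ ((j : ℤ) + m)
      = ∑ s ∈ (Finset.range (n + 1)).image (fun j : ℕ => (j : ℤ) + m), Δ s :=
    (Finset.sum_image (fun a ha b hb => hinj ha hb)).symm
  set S := (Finset.range (n + 1)).image (fun j : ℕ => (j : ℤ) + m) with hS
  have h2 : ∑ s ∈ S, Δ s = ∑ s ∈ S.filter (fun s => -1 ≤ s ∧ s ≤ L - 1), Δ s :=
    (Finset.sum_filter_of_ne (fun s _ hne => by
      by_contra hc; exact hne (hΔ0 s hc))).symm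
  have hsub : S.filter (fun s => -1 ≤ s ∧ s ≤ L - 1)
      ⊆ insert (-1) (insert (L - 1) (Finset.Icc 0 (L - 2))) := by
    intro s hs
    simp only [Finset.mem_filter, Finset.mem_insert, Finset.mem_Icc] at hs ⊢
    omega
  have h3 : ∑ s ∈ S.filter (fun s => -1 ≤ s ∧ s ≤ L - 1), Δ s
      ≤ ∑ s ∈ insert (-1) (insert (L - 1) (Finset.Icc 0 (L - 2))), Δ s :=
    Finset.sum_le_sum_of_subset_of_nonneg hsub (fun s _ _ => hΔnn s)
  have h4 : ∑ s ∈ insert (-1:ℤ) (insert (L - 1) (Finset.Icc 0 (L - 2))), Δ s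
      ≤ 2 + (2 + ∑ s ∈ Finset.Icc 0 (L - 2), Δ s) := by
    refine le_trans (sum_insert_le' hΔnn _) ?_
    refine add_le_add (hΔ2 _) ?_
    exact le_trans (sum_insert_le' hΔnn _) (add_le_add_left (hΔ2 _) _)
  have h5 : ∑ s ∈ Finset.Icc (0:ℤ) (L - 2), Δ s
      = ∑ j ∈ Finset.range (n - k.natAbs - 1), Δ (j : ℤ) := by
    rw [show Finset.Icc (0:ℤ) (L - 2)
        = (Finset.range (n - k.natAbs - 1)).image (fun j : ℕ => (j : ℤ)) from ?_]
    · exact Finset.sum_image (fun a _ b _ hab => by exact_mod_cast hab)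
    · ext s
      simp only [Finset.mem_Icc, Finset.mem_image, Finset.mem_range]
      constructor
      · intro hs; exact ⟨s.toNat, by omega, by omega⟩
      · rintro ⟨j, hj, rfl⟩; omega
  calc ∑ j ∈ Finset.range (n + 1), Δ ((j : ℤ) + m)
      = ∑ s ∈ S.filter (fun s => -1 ≤ s ∧ s ≤ L - 1), Δ s := by rw [h1, h2]
    _ ≤ 2 + (2 + ∑ s ∈ Finset.Icc 0 (L - 2), Δ s) := le_trans h3 h4
    _ = (∑ j ∈ Finset.range (n - k.natAbs - 1), Δ (j : ℤ)) + 4 := by rw [h5]; ring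

lemma shift_sum_le {n : ℕ} {A : Matrix (Fin n) (Fin n) ℂ}
    (hA : ∀ i j : Fin n, ‖A i j‖ ≤ 1) (k ν : ℤ) :
    ∑ j ∈ Finset.range (n + 1), ‖diagEntry A k (ν + (j : ℤ)) - diagEntry A k (j : ℤ)‖
      ≤ (ν.natAbs : ℝ) * ((∑ j ∈ Finset.range (n - k.natAbs - 1),
          ‖diagEntry A k ((j : ℤ) + 1) - diagEntry A k (j : ℤ)‖) + 4) := by
  set a : ℤ → ℂ := diagEntry A k with ha
  set V : ℝ := ∑ j ∈ Finset.range (n - k.natAbs - 1), ‖a ((j : ℤ) + 1) - a (j : ℤ)‖ with hV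
  set N : ℕ := ν.natAbs with hN
  by_cases hν : 0 ≤ ν
  · have key : ∀ j : ℕ, ‖a (ν + (j : ℤ)) - a (j : ℤ)‖
        ≤ ∑ t ∈ Finset.range N, ‖a ((j : ℤ) + (t : ℤ) + 1) - a ((j : ℤ) + (t : ℤ))‖ := by
      intro j
      have h := telescope_norm_le a (j : ℤ) N
      rwa [show (j : ℤ) + (N : ℤ) = ν + (j : ℤ) from by omega] at h
    calc ∑ j ∈ Finset.range (n + 1), ‖a (ν + (j : ℤ)) - a (j : ℤ)‖
        ≤ ∑ j ∈ Finset.range (n + 1), ∑ t ∈ Finset.range N,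
            ‖a ((j : ℤ) + (t : ℤ) + 1) - a ((j : ℤ) + (t : ℤ))‖ :=
          Finset.sum_le_sum (fun j _ => key j)
      _ = ∑ t ∈ Finset.range N, ∑ j ∈ Finset.range (n + 1),
            ‖a ((j : ℤ) + (t : ℤ) + 1) - a ((j : ℤ) + (t : ℤ))‖ := Finset.sum_comm
      _ ≤ ∑ t ∈ Finset.range N, (V + 4) :=
          Finset.sum_le_sum (fun t _ => step_sum_le hA k (t : ℤ))
      _ = (N : ℝ) * (V + 4) := by
          rw [Finset.sum_const, Finset.card_range, nsmul_eq_mul]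
  · have key : ∀ j : ℕ, ‖a (ν + (j : ℤ)) - a (j : ℤ)‖
        ≤ ∑ t ∈ Finset.range N, ‖a ((j : ℤ) + (ν + (t : ℤ)) + 1) - a ((j : ℤ) + (ν + (t : ℤ)))‖ := by
      intro j
      have h := telescope_norm_le a (ν + (j : ℤ)) N
      rw [show ν + (j : ℤ) + (N : ℤ) = (j : ℤ) from by omega, norm_sub_rev] at h
      refine le_trans h (le_of_eq (Finset.sum_congr rfl (fun t _ => ?_)))
      rw [show ν + (j : ℤ) + (t : ℤ) + 1 = (j : ℤ) + (ν + (t : ℤ)) + 1 from by ring,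
        show ν + (j : ℤ) + (t : ℤ) = (j : ℤ) + (ν + (t : ℤ)) from by ring]
    calc ∑ j ∈ Finset.range (n + 1), ‖a (ν + (j : ℤ)) - a (j : ℤ)‖
        ≤ ∑ j ∈ Finset.range (n + 1), ∑ t ∈ Finset.range N,
            ‖a ((j : ℤ) + (ν + (t : ℤ)) + 1) - a ((j : ℤ) + (ν + (t : ℤ)))‖ :=
          Finset.sum_le_sum (fun j _ => key j)
      _ = ∑ t ∈ Finset.range N, ∑ j ∈ Finset.range (n + 1),
            ‖a ((j : ℤ) + (ν + (t : ℤ)) + 1) - a ((j : ℤ) + (ν + (t : ℤ)))‖ := Finset.sum_comm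
      _ ≤ ∑ t ∈ Finset.range N, (V + 4) :=
          Finset.sum_le_sum (fun t _ => step_sum_le hA k (ν + (t : ℤ)))
      _ = (N : ℝ) * (V + 4) := by
          rw [Finset.sum_const, Finset.card_range, nsmul_eq_mul]

/-- A sequence of `n × n` matrices has vanishing mean variation if along each diagonal `k`,
`∑_{j=0}^{n-|k|-2} |a_{k;j+1}(n) - a_{k;j}(n)| = o(n)` as `n → ∞`. -/
def VMV (A : ∀ n : ℕ, Matrix (Fin n) (Fin n) ℂ) : Prop :=
  ∀ k : ℤ, (fun n : ℕ => ∑ j ∈ Finset.range (n - k.natAbs - 1),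
      ‖diagEntry (A n) k ((j : ℤ) + 1) - diagEntry (A n) k (j : ℤ)‖)
    =o[atTop] (fun n : ℕ => (n : ℝ))

/-- **Shift lemma.** For a vanishing-mean-variation sequence of matrices with entries bounded
in modulus by `1`, and any fixed integers `ν₁, …, ν_p` and `h₁, …, h_p`,
`∑_{j=0}^{n} a_{h₁;ν₁+j} ⋯ a_{h_p;ν_p+j} = ∑_{j=0}^{n} a_{h₁;j} ⋯ a_{h_p;j} + o(n)`. -/
theorem shift_lemma (A : ∀ n : ℕ, Matrix (Fin n) (Fin n) ℂ)
    (hVMV : VMV A)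
    (hbound : ∀ n, ∀ i j : Fin n, ‖A n i j‖ ≤ 1)
    (p : ℕ) (ν h : Fin p → ℤ) :
    (fun n : ℕ =>
        (∑ j ∈ Finset.range (n + 1), ∏ i : Fin p, diagEntry (A n) (h i) (ν i + (j : ℤ))) -
        ∑ j ∈ Finset.range (n + 1), ∏ i : Fin p, diagEntry (A n) (h i) (j : ℤ))
      =o[atTop] (fun n : ℕ => (n : ℝ)) := by
  set V : Fin p → ℕ → ℝ := fun i n => ∑ j ∈ Finset.range (n - (h i).natAbs - 1),
      ‖diagEntry (A n) (h i) ((j : ℤ) + 1) - diagEntry (A n) (h i) (j : ℤ)‖ with hVdef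
  set G : ℕ → ℝ := fun n => ∑ i : Fin p, ((ν i).natAbs : ℝ) * (V i n + 4) with hGdef
  have hFG : ∀ n : ℕ,
      ‖(∑ j ∈ Finset.range (n + 1), ∏ i : Fin p, diagEntry (A n) (h i) (ν i + (j : ℤ))) -
        ∑ j ∈ Finset.range (n + 1), ∏ i : Fin p, diagEntry (A n) (h i) (j : ℤ)‖ ≤ G n := by
    intro n
    rw [← Finset.sum_sub_distrib]
    calc ‖∑ j ∈ Finset.range (n + 1),
            ((∏ i : Fin p, diagEntry (A n) (h i) (ν i + (j : ℤ))) -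
              ∏ i : Fin p, diagEntry (A n) (h i) (j : ℤ))‖
        ≤ ∑ j ∈ Finset.range (n + 1),
            ‖(∏ i : Fin p, diagEntry (A n) (h i) (ν i + (j : ℤ))) -
              ∏ i : Fin p, diagEntry (A n) (h i) (j : ℤ)‖ := norm_sum_le _ _
      _ ≤ ∑ j ∈ Finset.range (n + 1), ∑ i : Fin p,
            ‖diagEntry (A n) (h i) (ν i + (j : ℤ)) - diagEntry (A n) (h i) (j : ℤ)‖ :=
          Finset.sum_le_sum (fun j _ => norm_prod_sub_prod_le Finset.univ _ _
            (fun i => diagEntry_norm_le (hbound n) _ _)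
            (fun i => diagEntry_norm_le (hbound n) _ _))
      _ = ∑ i : Fin p, ∑ j ∈ Finset.range (n + 1),
            ‖diagEntry (A n) (h i) (ν i + (j : ℤ)) - diagEntry (A n) (h i) (j : ℤ)‖ :=
          Finset.sum_comm
      _ ≤ G n := Finset.sum_le_sum (fun i _ => shift_sum_le (hbound n) (h i) (ν i))
  have hG : G =o[atTop] (fun n : ℕ => (n : ℝ)) := by
    refine IsLittleO.fun_sum (fun i _ => ?_)
    refine IsLittleO.const_mul_left ?_ _
    refine IsLittleO.add (hVMV (h i)) ?_
    exact isLittleO_const_left.2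
      (Or.inr (tendsto_norm_atTop_atTop.comp tendsto_natCast_atTop_atTop))
  refine IsBigO.trans_isLittleO ?_ hG
  exact Asymptotics.isBigO_of_le atTop (fun n => (hFG n).trans (le_abs_self _))
end

section
/- Let M > 0 and let {A_n} and {B_n} be sequences of n×n complex matrices with spectral norms ‖A_n‖_∞ ≤ M and ‖B_n‖_∞ ≤ M for all n, and with ‖A_n − B_n‖_tr = o(n) as n → ∞. Then for every function φ that is analytic on an open neighborhood of the closed disk {z ∈ ℂ : |z| ≤ M}, one has Σ_{k=1}^{n} φ(λ_k(A_n)) − Σ_{k=1}^{n} φ(λ_k(B_n)) = o(n) as n → ∞, where λ_1, …, λ_n denote the eigenvalues counted with multiplicity (all of which lie in the closed disk of radius M). -/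
open Filter Asymptotics Matrix

/-- The spectral norm (ℓ² → ℓ² operator norm, i.e. the largest singular value)
of a complex matrix. -/
noncomputable def specNorm {n : ℕ} (A : Matrix (Fin n) (Fin n) ℂ) : ℝ :=
  ‖LinearMap.toContinuousLinearMap (Matrix.toEuclideanLin A)‖

/-- The trace norm `‖A‖_tr = ∑ σ_k(A)`, the sum of the singular values of `A`,
i.e. of the square roots of the eigenvalues of `Aᴴ A`. -/
noncomputable def traceNorm {n : ℕ} (A : Matrix (Fin n) (Fin n) ℂ) : ℝ :=
  ∑ i, Real.sqrt ((Matrix.isHermitian_conjTranspose_mul_self A).eigenvalues i)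

section Aux

set_option linter.unusedSectionVars false

open Matrix Polynomial Metric
open scoped Matrix.Norms.L2Operator

/- ### Block-triangular lemmas -/

section Blocks
variable {m l : Type*} [Fintype m] [Fintype l] [DecidableEq m] [DecidableEq l]

private lemma trace_fromBlocks' (A : Matrix m m ℂ) (B : Matrix m l ℂ) (C : Matrix l m ℂ)
    (D : Matrix l l ℂ) : (fromBlocks A B C D).trace = A.trace + D.trace := by
  simp [Matrix.trace, Fintype.sum_sum_type, Matrix.diag]

private lemma charmatrix_fromBlocks' (A : Matrix m m ℂ) (B : Matrix m l ℂ) (D : Matrix l l ℂ) :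
    charmatrix (fromBlocks A B 0 D)
      = fromBlocks (charmatrix A) (-(B.map C)) 0 (charmatrix D) := by
  ext (i|i) (j|j) <;>
    simp [charmatrix_apply, Matrix.diagonal_apply, Matrix.fromBlocks, Matrix.of_apply]

private lemma charpoly_fromBlocks' (A : Matrix m m ℂ) (B : Matrix m l ℂ) (D : Matrix l l ℂ) :
    (fromBlocks A B 0 D).charpoly = A.charpoly * D.charpoly := by
  unfold Matrix.charpoly
  rw [charmatrix_fromBlocks', det_fromBlocks_zero₂₁]

private lemma pow_blocks (A : Matrix m m ℂ) (B : Matrix m l ℂ) (D : Matrix l l ℂ) (k : ℕ) :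
    ∃ B', (fromBlocks A B 0 D) ^ k = fromBlocks (A ^ k) B' 0 (D ^ k) := by
  induction k with
  | zero => exact ⟨0, by simp [pow_zero, Matrix.fromBlocks_one]⟩
  | succ k ih =>
    obtain ⟨P, hP⟩ := ih
    refine ⟨A ^ k * B + P * D, ?_⟩
    rw [pow_succ, hP, Matrix.fromBlocks_multiply]
    simp [pow_succ]

private lemma aeval_blocks (A : Matrix m m ℂ) (B : Matrix m l ℂ) (D : Matrix l l ℂ) (p : ℂ[X]) :
    ∃ B', Polynomial.aeval (fromBlocks A B 0 D) p
      = fromBlocks (Polynomial.aeval A p) B' 0 (Polynomial.aeval D p) := by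
  induction p using Polynomial.induction_on' with
  | add p q hp hq =>
    obtain ⟨P, hP⟩ := hp; obtain ⟨Q, hQ⟩ := hq
    exact ⟨P + Q, by rw [map_add, hP, hQ, map_add, map_add, Matrix.fromBlocks_add, add_zero]⟩
  | monomial k a =>
    obtain ⟨P, hP⟩ := pow_blocks A B D k
    refine ⟨a • P, ?_⟩
    rw [aeval_monomial, aeval_monomial, aeval_monomial, hP]
    rw [Algebra.algebraMap_eq_smul_one, Algebra.algebraMap_eq_smul_one,
      Algebra.algebraMap_eq_smul_one, smul_mul_assoc, smul_mul_assoc, smul_mul_assoc,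
      one_mul, one_mul, one_mul, Matrix.fromBlocks_smul, smul_zero]

private lemma trace_aeval_blocks (A : Matrix m m ℂ) (B : Matrix m l ℂ) (D : Matrix l l ℂ)
    (p : ℂ[X]) :
    (Polynomial.aeval (fromBlocks A B 0 D) p).trace
      = (Polynomial.aeval A p).trace + (Polynomial.aeval D p).trace := by
  obtain ⟨P, hP⟩ := aeval_blocks A B D p
  rw [hP, trace_fromBlocks']

end Blocks

/- ### eigenvectors from roots of the characteristic polynomial -/

private lemma eigvec_of_root {n : ℕ} (A : Matrix (Fin n) (Fin n) ℂ) {μ : ℂ}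
    (hroot : A.charpoly.IsRoot μ) : ∃ v : Fin n → ℂ, v ≠ 0 ∧ A *ᵥ v = μ • v := by
  have hdet : (μ • (1 : Matrix (Fin n) (Fin n) ℂ) - A).det = 0 := by
    have hmap : (charmatrix A).map (Polynomial.eval μ)
        = μ • (1 : Matrix (Fin n) (Fin n) ℂ) - A := by
      ext i j
      by_cases h : i = j <;>
        simp [charmatrix_apply, Matrix.diagonal_apply, h, Matrix.one_apply]
    have h0 := RingHom.map_det (Polynomial.evalRingHom μ) (charmatrix A)
    rw [RingHom.mapMatrix_apply] at h0
    have h1 : (charmatrix A).map ⇑(Polynomial.evalRingHom μ)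
        = (charmatrix A).map (Polynomial.eval μ) := rfl
    rw [h1, hmap] at h0
    rw [← h0]
    exact hroot
  obtain ⟨v, hv0, hv⟩ := (Matrix.exists_mulVec_eq_zero_iff).2 hdet
  refine ⟨v, hv0, ?_⟩
  rw [Matrix.sub_mulVec, sub_eq_zero] at hv
  rw [← hv, Matrix.smul_mulVec, Matrix.one_mulVec]

/- ### The key spectral mapping identity: `∑ p(λ_k(A)) = tr p(A)` -/

private lemma sum_eval_roots (N : ℕ) (A : Matrix (Fin N) (Fin N) ℂ) (p : ℂ[X]) :
    ((A.charpoly.roots).map (fun μ => p.eval μ)).sum = (Polynomial.aeval A p).trace := by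
  induction N with
  | zero =>
    have h1 : A.charpoly = 1 := by
      unfold Matrix.charpoly; exact Matrix.det_isEmpty
    rw [h1, Polynomial.roots_one]
    simp [Matrix.trace]
  | succ N ih =>
    classical
    have hdeg : A.charpoly.natDegree = N + 1 := by
      rw [Matrix.charpoly_natDegree_eq_dim, Fintype.card_fin]
    have hdegpos : 0 < A.charpoly.degree := by
      rw [Polynomial.degree_eq_natDegree (Matrix.charpoly_monic A).ne_zero, hdeg]
      exact_mod_cast Nat.succ_pos N
    obtain ⟨μ, hμ⟩ := Complex.exists_root hdegpos
    obtain ⟨v, hv0, hAv⟩ := eigvec_of_root A hμ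
    set f : (Fin (N+1) → ℂ) →ₗ[ℂ] (Fin (N+1) → ℂ) := Matrix.toLin' A with hf
    have hfv : f v = μ • v := by
      rw [hf, Matrix.toLin'_apply, hAv]
    have hli : LinearIndepOn ℂ id ({v} : Set (Fin (N+1) → ℂ)) :=
      LinearIndepOn.singleton hv0
    let b := Module.Basis.extend hli
    haveI : Fintype ↥(hli.extend (Set.subset_univ _)) := FiniteDimensional.fintypeBasisIndex b
    have hcard : Fintype.card ↥(hli.extend (Set.subset_univ _)) = N + 1 := by
      have := Module.finrank_eq_card_basis b
      rw [Module.finrank_pi ℂ, Fintype.card_fin] at this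
      omega
    have hvmem : v ∈ hli.extend (Set.subset_univ _) :=
      hli.subset_extend _ (Set.mem_singleton v)
    let e1 : Fin (N+1) ≃ ↥(hli.extend (Set.subset_univ _)) :=
      (Fintype.equivOfCardEq (by rw [hcard, Fintype.card_fin]))
    let e : Fin (N+1) ≃ ↥(hli.extend (Set.subset_univ _)) :=
      (Equiv.swap (0 : Fin (N+1)) (e1.symm ⟨v, hvmem⟩)).trans e1
    have he0 : e 0 = ⟨v, hvmem⟩ := by
      simp [e, Equiv.swap_apply_left]
    let c : Module.Basis (Fin (N+1)) ℂ (Fin (N+1) → ℂ) := b.reindex e.symm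
    have hc : ∀ i, c i = b (e i) := by
      intro i; rw [Module.Basis.reindex_apply, Equiv.symm_symm]
    have hc0 : c 0 = v := by
      rw [hc, he0, Module.Basis.extend_apply_self]
    set E : Matrix (Fin (N+1)) (Fin (N+1)) ℂ ≃ₐ[ℂ] Matrix (Fin (N+1)) (Fin (N+1)) ℂ :=
      (Matrix.toLinAlgEquiv' : Matrix (Fin (N+1)) (Fin (N+1)) ℂ ≃ₐ[ℂ] _).trans
        (LinearMap.toMatrixAlgEquiv c) with hE
    have hEA : E A = LinearMap.toMatrixAlgEquiv c f := by
      rw [hE]; rfl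
    have hEcol : ∀ i, E A i 0 = if i = 0 then μ else 0 := by
      intro i
      rw [hEA, LinearMap.toMatrixAlgEquiv_apply, hc0, hfv, ← hc0, _root_.map_smul,
        c.repr_self]
      simp [Finsupp.single_apply, eq_comm]
    have hcharE : (E A).charpoly = A.charpoly := by
      rw [hEA]
      have h1 : (LinearMap.toMatrixAlgEquiv c f) = LinearMap.toMatrix c c f := rfl
      rw [h1, LinearMap.charpoly_toMatrix]
      have h2 : A = LinearMap.toMatrix (Pi.basisFun ℂ (Fin (N+1))) (Pi.basisFun ℂ (Fin (N+1))) f := by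
        rw [LinearMap.toMatrix_eq_toMatrix', hf, LinearMap.toMatrix'_toLin']
      conv_rhs => rw [h2]
      rw [LinearMap.charpoly_toMatrix]
    have htraceE : ∀ q : ℂ[X], (Polynomial.aeval (E A) q).trace = (Polynomial.aeval A q).trace := by
      intro q
      rw [Polynomial.aeval_algHom_apply E A q]
      have h1 : ∀ X : Matrix (Fin (N+1)) (Fin (N+1)) ℂ, (E X).trace = X.trace := by
        intro X
        have : E X = LinearMap.toMatrix c c (Matrix.toLin' X) := rfl
        rw [this, ← LinearMap.trace_eq_matrix_trace ℂ c (Matrix.toLin' X),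
          LinearMap.trace_eq_matrix_trace ℂ (Pi.basisFun ℂ (Fin (N+1))) (Matrix.toLin' X),
          LinearMap.toMatrix_eq_toMatrix', LinearMap.toMatrix'_toLin']
      exact h1 _
    let g : (Fin 1 ⊕ Fin N) ≃ Fin (N+1) := finSumFinEquiv.trans (finCongr (Nat.add_comm 1 N))
    have hg0 : g (Sum.inl 0) = 0 := rfl
    set Mb : Matrix (Fin 1 ⊕ Fin N) (Fin 1 ⊕ Fin N) ℂ :=
      (Matrix.reindexAlgEquiv ℂ _ g.symm) (E A) with hMb
    have hMbapp : ∀ i j, Mb i j = E A (g i) (g j) := by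
      intro i j
      rw [hMb, Matrix.reindexAlgEquiv_apply, Matrix.reindex_apply, Matrix.submatrix_apply,
        Equiv.symm_symm]
    have hchar : Mb.charpoly = A.charpoly := by
      rw [hMb, Matrix.reindexAlgEquiv_apply, Matrix.charpoly_reindex, hcharE]
    have htrace : ∀ q : ℂ[X], (Polynomial.aeval Mb q).trace = (Polynomial.aeval A q).trace := by
      intro q
      rw [hMb, Polynomial.aeval_algHom_apply (Matrix.reindexAlgEquiv ℂ ℂ g.symm) (E A) q]
      rw [Matrix.reindexAlgEquiv_apply, Matrix.reindex_apply, Equiv.symm_symm]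
      have hsub : ∀ X : Matrix (Fin (N+1)) (Fin (N+1)) ℂ,
          (X.submatrix ⇑g ⇑g).trace = X.trace := by
        intro X
        simp only [Matrix.trace, Matrix.diag, Matrix.submatrix_apply]
        exact Equiv.sum_comp g (fun j => X j j)
      rw [hsub]
      exact htraceE q
    have h11 : Mb.toBlocks₁₁ = μ • (1 : Matrix (Fin 1) (Fin 1) ℂ) := by
      ext i j
      show Mb (Sum.inl i) (Sum.inl j) = (μ • (1 : Matrix (Fin 1) (Fin 1) ℂ)) i j
      rw [Subsingleton.elim i 0, Subsingleton.elim j 0, hMbapp, hg0, hEcol]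
      simp [Matrix.one_apply]
    have h21 : Mb.toBlocks₂₁ = 0 := by
      ext i j
      show Mb (Sum.inr i) (Sum.inl j) = 0
      rw [Subsingleton.elim j 0, hMbapp, hg0, hEcol, if_neg]
      intro h
      have hne : g (Sum.inr i) ≠ g (Sum.inl 0) := g.injective.ne (by simp)
      rw [hg0] at hne
      exact hne h
    have hblocks : Mb = fromBlocks (μ • (1 : Matrix (Fin 1) (Fin 1) ℂ)) Mb.toBlocks₁₂ 0
        Mb.toBlocks₂₂ := by
      conv_lhs => rw [← Matrix.fromBlocks_toBlocks Mb]
      rw [h11, h21]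
    have hMbchar : Mb.charpoly = (X - Polynomial.C μ) * Mb.toBlocks₂₂.charpoly := by
      conv_lhs => rw [hblocks]
      rw [charpoly_fromBlocks']
      congr 1
      unfold Matrix.charpoly
      rw [Matrix.det_fin_one, charmatrix_apply_eq]
      congr 1
      simp [Matrix.smul_apply, Matrix.one_apply]
    have hQ : Mb.toBlocks₂₂.charpoly ≠ 0 := (Matrix.charpoly_monic _).ne_zero
    have hrootsmul : ((X - Polynomial.C μ) * Mb.toBlocks₂₂.charpoly).roots
        = {μ} + Mb.toBlocks₂₂.charpoly.roots := by
      rw [Polynomial.roots_mul (mul_ne_zero (Polynomial.X_sub_C_ne_zero μ) hQ),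
        Polynomial.roots_X_sub_C]
    have h1x1 : (Polynomial.aeval (μ • (1 : Matrix (Fin 1) (Fin 1) ℂ)) p).trace = p.eval μ := by
      have hsc : μ • (1 : Matrix (Fin 1) (Fin 1) ℂ) = algebraMap ℂ _ μ :=
        (Algebra.algebraMap_eq_smul_one μ).symm
      rw [hsc, Polynomial.aeval_algebraMap_apply, Algebra.algebraMap_eq_smul_one,
        Matrix.trace_smul, Matrix.trace_one]
      simp [Polynomial.aeval_def, Polynomial.eval_eq_sum, Polynomial.eval₂_eq_sum]
    rw [← hchar, hMbchar, hrootsmul, Multiset.map_add, Multiset.sum_add,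
      Multiset.map_singleton, Multiset.sum_singleton, ih Mb.toBlocks₂₂, ← htrace p]
    conv_rhs => rw [hblocks]
    rw [trace_aeval_blocks, h1x1]

/- ### trace norm inequalities -/

private lemma traceNorm_nonneg {n : ℕ} (A : Matrix (Fin n) (Fin n) ℂ) : 0 ≤ traceNorm A :=
  Finset.sum_nonneg fun _ _ => Real.sqrt_nonneg _

private lemma specNorm_eq {n : ℕ} (A : Matrix (Fin n) (Fin n) ℂ) : specNorm A = ‖A‖ := rfl

private lemma trace_eq_sum_inner {n : ℕ} (A : Matrix (Fin n) (Fin n) ℂ)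
    (u : OrthonormalBasis (Fin n) ℂ (EuclideanSpace ℂ (Fin n))) :
    A.trace = ∑ i, inner ℂ (u i) (Matrix.toEuclideanLin A (u i)) := by
  have h1 : A.trace = LinearMap.trace ℂ _ (Matrix.toEuclideanLin A) := by
    rw [LinearMap.trace_eq_matrix_trace ℂ (PiLp.basisFun 2 ℂ (Fin n)) (toEuclideanLin A)]
    congr 1
    rw [Matrix.toEuclideanLin_eq_toLin, LinearMap.toMatrix_toLin]
  rw [h1, LinearMap.trace_eq_matrix_trace ℂ u.toBasis]
  simp only [Matrix.trace, Matrix.diag, LinearMap.toMatrix_apply, OrthonormalBasis.coe_toBasis,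
    OrthonormalBasis.coe_toBasis_repr_apply, OrthonormalBasis.repr_apply_apply]

private lemma norm_toEuclideanLin_apply_le {n : ℕ} (Z : Matrix (Fin n) (Fin n) ℂ)
    (x : EuclideanSpace ℂ (Fin n)) : ‖Matrix.toEuclideanLin Z x‖ ≤ ‖Z‖ * ‖x‖ :=
  (LinearMap.toContinuousLinearMap (Matrix.toEuclideanLin Z)).le_opNorm x

private lemma norm_C_eigvec {n : ℕ} (C : Matrix (Fin n) (Fin n) ℂ) (i : Fin n) :
    ‖Matrix.toEuclideanLin C ((Matrix.isHermitian_conjTranspose_mul_self C).eigenvectorBasis i)‖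
      = Real.sqrt ((Matrix.isHermitian_conjTranspose_mul_self C).eigenvalues i) := by
  set hC := Matrix.isHermitian_conjTranspose_mul_self C
  set u : EuclideanSpace ℂ (Fin n) := hC.eigenvectorBasis i with hu
  have hnu : ‖u‖ = 1 := hC.eigenvectorBasis.orthonormal.1 i
  set w : Fin n → ℂ := WithLp.equiv 2 _ u with hw
  have key : star w ⬝ᵥ ((Cᴴ * C) *ᵥ w) = (hC.eigenvalues i : ℂ) * (star w ⬝ᵥ w) := by
    rw [show (Cᴴ * C) *ᵥ w = _ from hC.mulVec_eigenvectorBasis i, dotProduct_smul]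
    simp [smul_eq_mul]
    exact Or.inl rfl
  have hww : star w ⬝ᵥ w = (1 : ℂ) := by
    have h0 : (inner ℂ u u : ℂ) = 1 := by
      rw [inner_self_eq_norm_sq_to_K, hnu]; norm_num
    rw [← h0, EuclideanSpace.inner_eq_star_dotProduct]; exact dotProduct_comm _ _
  have hCw : Matrix.toEuclideanLin C u = (WithLp.equiv 2 _).symm (C *ᵥ w) :=
    Matrix.toEuclideanLin_apply C u
  have hsq : ‖Matrix.toEuclideanLin C u‖ ^ 2 = hC.eigenvalues i := by
    have h1 : (inner ℂ (Matrix.toEuclideanLin C u) (Matrix.toEuclideanLin C u) : ℂ)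
        = star (C *ᵥ w) ⬝ᵥ (C *ᵥ w) := by
      rw [hCw, EuclideanSpace.inner_toLp_toLp]; exact dotProduct_comm _ _
    have h2 : star (C *ᵥ w) ⬝ᵥ (C *ᵥ w) = star w ⬝ᵥ ((Cᴴ * C) *ᵥ w) := by
      rw [Matrix.star_mulVec, ← Matrix.mulVec_mulVec, dotProduct_mulVec,
        dotProduct_mulVec, dotProduct_mulVec]
    have h3 : (inner ℂ (Matrix.toEuclideanLin C u) (Matrix.toEuclideanLin C u) : ℂ)
        = (hC.eigenvalues i : ℂ) := by
      rw [h1, h2, key, hww, mul_one]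
    have h4 := inner_self_eq_norm_sq_to_K (𝕜 := ℂ) (Matrix.toEuclideanLin C u)
    rw [h3] at h4
    have h5 : ((hC.eigenvalues i : ℝ) : ℂ) = ((‖Matrix.toEuclideanLin C u‖ ^ 2 : ℝ) : ℂ) := by
      rw [h4]; norm_cast
    exact_mod_cast h5.symm
  rw [← hsq, Real.sqrt_sq (norm_nonneg _)]

private lemma abs_trace_mul_le {n : ℕ} (Z C : Matrix (Fin n) (Fin n) ℂ) :
    ‖(Z * C).trace‖ ≤ ‖Z‖ * traceNorm C := by
  set hC := Matrix.isHermitian_conjTranspose_mul_self C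
  set u := hC.eigenvectorBasis
  rw [trace_eq_sum_inner (Z * C) u, traceNorm, Finset.mul_sum]
  refine (norm_sum_le _ _).trans (Finset.sum_le_sum fun i _ => ?_)
  have hmul : Matrix.toEuclideanLin (Z * C) (u i)
      = Matrix.toEuclideanLin Z (Matrix.toEuclideanLin C (u i)) := by
    rw [Matrix.toEuclideanLin_eq_toLin, Matrix.toLin_mul _ (PiLp.basisFun 2 ℂ (Fin n)) _]
    rfl
  calc ‖(inner ℂ (u i) (Matrix.toEuclideanLin (Z * C) (u i)) : ℂ)‖
      ≤ ‖u i‖ * ‖Matrix.toEuclideanLin (Z * C) (u i)‖ := norm_inner_le_norm _ _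
    _ = ‖Matrix.toEuclideanLin Z (Matrix.toEuclideanLin C (u i))‖ := by
        rw [u.orthonormal.1 i, one_mul, hmul]
    _ ≤ ‖Z‖ * ‖Matrix.toEuclideanLin C (u i)‖ := norm_toEuclideanLin_apply_le _ _
    _ = ‖Z‖ * Real.sqrt (hC.eigenvalues i) := by rw [norm_C_eigvec]

/- ### roots lie in the disk of radius `specNorm` -/

private lemma root_norm_le {n : ℕ} (A : Matrix (Fin n) (Fin n) ℂ) {μ : ℂ}
    (hμ : μ ∈ A.charpoly.roots) : ‖μ‖ ≤ specNorm A := by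
  rw [specNorm_eq]
  have hroot : A.charpoly.IsRoot μ := Polynomial.isRoot_of_mem_roots hμ
  obtain ⟨v, hv0, hv⟩ := eigvec_of_root A hroot
  set x : EuclideanSpace ℂ (Fin n) := (WithLp.equiv 2 _).symm v with hx
  have hx0 : ‖x‖ ≠ 0 := by
    simp only [norm_ne_zero_iff]
    intro h
    apply hv0
    have := congrArg (WithLp.equiv 2 (Fin n → ℂ)) h
    simpa [hx] using this
  have h1 : Matrix.toEuclideanLin A x = μ • x := by
    rw [hx, Matrix.toEuclideanLin_apply_piLp_toLp]
    show WithLp.toLp 2 (A *ᵥ v) = _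
    rw [hv]
    rfl
  have h2 : ‖Matrix.toEuclideanLin A x‖ ≤ ‖A‖ * ‖x‖ :=
    (LinearMap.toContinuousLinearMap (Matrix.toEuclideanLin A)).le_opNorm x
  rw [h1, norm_smul] at h2
  have hxpos : 0 < ‖x‖ := lt_of_le_of_ne (norm_nonneg x) (Ne.symm hx0)
  exact le_of_mul_le_mul_right h2 hxpos

private lemma card_roots_charpoly {n : ℕ} (A : Matrix (Fin n) (Fin n) ℂ) :
    Multiset.card A.charpoly.roots = n := by
  rw [Polynomial.splits_iff_card_roots.mp (IsAlgClosed.splits A.charpoly),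
    Matrix.charpoly_natDegree_eq_dim, Fintype.card_fin]

/- ### operator norm estimates -/

private lemma matrix_norm_one_le (n : ℕ) : ‖(1 : Matrix (Fin n) (Fin n) ℂ)‖ ≤ 1 := by
  rw [Matrix.cstar_norm_def, _root_.map_one]
  exact ContinuousLinearMap.norm_id_le

private lemma matrix_norm_pow_le {n : ℕ} (X : Matrix (Fin n) (Fin n) ℂ) {K : ℝ} (hK : 1 ≤ K)
    (hX : ‖X‖ ≤ K) (k : ℕ) : ‖X ^ k‖ ≤ K ^ k := by
  induction k with
  | zero =>
    rw [pow_zero, pow_zero]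
    exact matrix_norm_one_le n
  | succ k ih =>
    rw [pow_succ, pow_succ]
    calc ‖X ^ k * X‖ ≤ ‖X ^ k‖ * ‖X‖ := Matrix.l2_opNorm_mul _ _
      _ ≤ K ^ k * K := by
          apply mul_le_mul ih hX (norm_nonneg _) (le_trans (by norm_num) (one_le_pow₀ hK))

/- ### Lipschitz estimate for traces of polynomials of matrices -/

private lemma pow_sub_pow_telescope {n : ℕ} (A B : Matrix (Fin n) (Fin n) ℂ) (i : ℕ) :
    A ^ i - B ^ i = ∑ j ∈ Finset.range i, A ^ j * (A - B) * B ^ (i - 1 - j) := by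
  induction i with
  | zero => simp
  | succ i ih =>
    rw [Finset.sum_range_succ]
    have hlast : (i + 1) - 1 - i = 0 := by omega
    rw [hlast, pow_zero, mul_one]
    have hstep : ∀ j ∈ Finset.range i, A ^ j * (A - B) * B ^ ((i+1) - 1 - j)
        = (A ^ j * (A - B) * B ^ (i - 1 - j)) * B := by
      intro j hj
      rw [Finset.mem_range] at hj
      rw [mul_assoc (A ^ j * (A - B)), ← pow_succ]
      congr 2
      omega
    rw [Finset.sum_congr rfl hstep, ← Finset.sum_mul, ← ih]
    rw [sub_mul, mul_sub, pow_succ, pow_succ]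
    abel

private lemma trace_pow_sub_le {n : ℕ} (A B : Matrix (Fin n) (Fin n) ℂ) {K : ℝ} (hK : 1 ≤ K)
    (hA : ‖A‖ ≤ K) (hB : ‖B‖ ≤ K) (i : ℕ) :
    ‖(A ^ i - B ^ i).trace‖ ≤ i * K ^ i * traceNorm (A - B) := by
  rw [pow_sub_pow_telescope, Matrix.trace_sum]
  calc ‖∑ j ∈ Finset.range i, (A ^ j * (A - B) * B ^ (i - 1 - j)).trace‖
      ≤ ∑ j ∈ Finset.range i, ‖(A ^ j * (A - B) * B ^ (i - 1 - j)).trace‖ :=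
        norm_sum_le _ _
    _ ≤ ∑ j ∈ Finset.range i, K ^ i * traceNorm (A - B) := by
        refine Finset.sum_le_sum fun j hj => ?_
        rw [Finset.mem_range] at hj
        have h1 : (A ^ j * (A - B) * B ^ (i - 1 - j)).trace
            = ((B ^ (i - 1 - j) * A ^ j) * (A - B)).trace := by
          rw [Matrix.trace_mul_comm, mul_assoc]
        rw [h1]
        calc ‖((B ^ (i - 1 - j) * A ^ j) * (A - B)).trace‖
            ≤ ‖B ^ (i - 1 - j) * A ^ j‖ * traceNorm (A - B) := abs_trace_mul_le _ _
          _ ≤ K ^ i * traceNorm (A - B) := by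
              refine mul_le_mul_of_nonneg_right ?_ (traceNorm_nonneg _)
              calc ‖B ^ (i - 1 - j) * A ^ j‖ ≤ ‖B ^ (i - 1 - j)‖ * ‖A ^ j‖ :=
                    Matrix.l2_opNorm_mul _ _
                _ ≤ K ^ (i - 1 - j) * K ^ j := by
                    refine mul_le_mul (matrix_norm_pow_le B hK hB _)
                      (matrix_norm_pow_le A hK hA _) (norm_nonneg _) ?_
                    positivity
                _ = K ^ ((i - 1 - j) + j) := (pow_add K _ _).symm
                _ ≤ K ^ i := pow_le_pow_right₀ hK (by omega)
    _ = i * K ^ i * traceNorm (A - B) := by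
        rw [Finset.sum_const, Finset.card_range, nsmul_eq_mul]
        ring

private lemma trace_aeval_sub_le {n : ℕ} (A B : Matrix (Fin n) (Fin n) ℂ) {K : ℝ} (hK : 1 ≤ K)
    (hA : specNorm A ≤ K) (hB : specNorm B ≤ K) (q : ℂ[X]) :
    ‖(Polynomial.aeval A q).trace - (Polynomial.aeval B q).trace‖
      ≤ (∑ i ∈ Finset.range (q.natDegree + 1), ‖q.coeff i‖ * i * K ^ i)
          * traceNorm (A - B) := by
  rw [specNorm_eq] at hA hB
  rw [Polynomial.aeval_eq_sum_range, Polynomial.aeval_eq_sum_range,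
    Matrix.trace_sum, Matrix.trace_sum, ← Finset.sum_sub_distrib]
  rw [Finset.sum_mul]
  refine (norm_sum_le _ _).trans (Finset.sum_le_sum fun i _ => ?_)
  rw [Matrix.trace_smul, Matrix.trace_smul, ← smul_sub, ← Matrix.trace_sub, norm_smul]
  calc ‖q.coeff i‖ * ‖(A ^ i - B ^ i).trace‖
      ≤ ‖q.coeff i‖ * (i * K ^ i * traceNorm (A - B)) :=
        mul_le_mul_of_nonneg_left (trace_pow_sub_le A B hK hA hB i) (norm_nonneg _)
    _ = ‖q.coeff i‖ * i * K ^ i * traceNorm (A - B) := by ring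

/- ### polynomial approximation of analytic functions on the closed disk -/

private lemma closedBall_subset_of_thick {M δ : ℝ} (hM : 0 ≤ M) (hδ : 0 < δ) :
    closedBall (0 : ℂ) (M + δ) ⊆ Metric.cthickening δ (closedBall (0 : ℂ) M) := by
  intro z hz
  rw [mem_closedBall, dist_zero_right] at hz
  by_cases h : ‖z‖ ≤ M
  · exact Metric.self_subset_cthickening _ (by rwa [mem_closedBall, dist_zero_right])
  · push_neg at h
    have hz' : (0:ℝ) < ‖z‖ := lt_of_le_of_lt hM h
    have habs : ‖z‖ ≠ 0 := ne_of_gt hz'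
    set w : ℂ := (M / ‖z‖ : ℝ) • z with hw
    have hnw : ‖w‖ = M := by
      rw [hw, norm_smul]
      simp only [Real.norm_eq_abs]
      rw [abs_of_nonneg (by positivity)]
      rw [div_mul_eq_mul_div, mul_div_assoc, div_self habs, mul_one]
    have hdist : dist z w ≤ δ := by
      rw [dist_eq_norm]
      have : z - w = ((1 : ℝ) - M / ‖z‖) • z := by
        rw [hw, sub_smul, one_smul]
      rw [this, norm_smul, Real.norm_eq_abs, abs_of_nonneg]
      · have heq : (1 - M / ‖z‖) * ‖z‖ = ‖z‖ - M := by
          rw [sub_mul, one_mul, div_mul_cancel₀ _ habs]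
        rw [heq]
        linarith
      · have h1 : M / ‖z‖ ≤ 1 := by
          rw [div_le_one hz']
          linarith
        linarith
    exact Metric.mem_cthickening_of_dist_le z w δ _
      (by rw [mem_closedBall, dist_zero_right]; exact hnw.le) hdist

private lemma poly_approx {M : ℝ} (hM : 0 < M) (φ : ℂ → ℂ) (U : Set ℂ) (hU : IsOpen U)
    (hUM : closedBall (0 : ℂ) M ⊆ U) (hφ : AnalyticOnNhd ℂ φ U) {ε : ℝ} (hε : 0 < ε) :
    ∃ q : Polynomial ℂ, ∀ z ∈ closedBall (0 : ℂ) M, ‖φ z - q.eval z‖ ≤ ε := by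
  obtain ⟨δ, hδ, hsub⟩ :=
    (isCompact_closedBall (0 : ℂ) M).exists_cthickening_subset_open hU hUM
  have hball : closedBall (0 : ℂ) (M + δ) ⊆ U :=
    (closedBall_subset_of_thick hM.le hδ).trans hsub
  set r : NNReal := ⟨M + δ, by positivity⟩ with hr
  have hrpos : 0 < r := by
    rw [hr]
    exact_mod_cast (by positivity : (0:ℝ) < M + δ)
  have hdiff : DifferentiableOn ℂ φ (closedBall (0 : ℂ) (r : ℝ)) := by
    refine (hφ.mono ?_).differentiableOn
    exact hball
  have hps := hdiff.hasFPowerSeriesOnBall hrpos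
  set r' : NNReal := ⟨M + δ / 2, by positivity⟩ with hr'
  have hlt : (r' : ENNReal) < (r : ENNReal) := by
    rw [ENNReal.coe_lt_coe]
    rw [← NNReal.coe_lt_coe, hr, hr']
    show M + δ / 2 < M + δ
    linarith
  have htu := hps.tendstoUniformlyOn hlt
  rw [Metric.tendstoUniformlyOn_iff] at htu
  obtain ⟨N, hN⟩ := (htu ε hε).exists
  set p := cauchyPowerSeries φ 0 (r : ℝ)
  refine ⟨∑ k ∈ Finset.range N, Polynomial.C (p k (fun _ => 1)) * Polynomial.X ^ k,
    fun z hz => ?_⟩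
  have hzball : z ∈ ball (0 : ℂ) (r' : ℝ) := by
    rw [mem_ball, dist_zero_right]
    rw [mem_closedBall, dist_zero_right] at hz
    have : (r' : ℝ) = M + δ / 2 := rfl
    rw [this]
    linarith
  have heval : Polynomial.eval z (∑ k ∈ Finset.range N,
      Polynomial.C (p k (fun _ => 1)) * Polynomial.X ^ k) = p.partialSum N z := by
    rw [Polynomial.eval_finset_sum]
    unfold FormalMultilinearSeries.partialSum
    refine Finset.sum_congr rfl fun k _ => ?_
    rw [Polynomial.eval_mul, Polynomial.eval_C, Polynomial.eval_pow, Polynomial.eval_X]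
    have hsm : (fun _ : Fin k => z) = fun i : Fin k => z • (1 : ℂ) := by
      funext i; simp
    rw [hsm, (p k).map_smul_univ (fun _ : Fin k => z) (fun _ : Fin k => (1 : ℂ))]
    simp [smul_eq_mul, mul_comm]
  rw [heval]
  have h2 := hN z hzball
  rw [dist_eq_norm, zero_add] at h2
  exact h2.le

end Aux

/-- If `‖Aₙ‖_∞ ≤ M`, `‖Bₙ‖_∞ ≤ M` and `‖Aₙ - Bₙ‖_tr = o(n)`, then for every `φ` analytic on an
open neighborhood of the closed disk of radius `M`,
`∑_k φ(λ_k(Aₙ)) - ∑_k φ(λ_k(Bₙ)) = o(n)`, where the eigenvalues are the roots of the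
characteristic polynomial counted with multiplicity. -/
theorem trace_comparison_analytic (M : ℝ) (hM : 0 < M)
    (A B : ∀ n : ℕ, Matrix (Fin n) (Fin n) ℂ)
    (hA : ∀ n, specNorm (A n) ≤ M) (hB : ∀ n, specNorm (B n) ≤ M)
    (htr : (fun n : ℕ => traceNorm (A n - B n)) =o[atTop] (fun n : ℕ => (n : ℝ)))
    (φ : ℂ → ℂ) (U : Set ℂ) (hU : IsOpen U) (hUM : Metric.closedBall (0 : ℂ) M ⊆ U)
    (hφ : AnalyticOnNhd ℂ φ U) :
    (fun n : ℕ => (((A n).charpoly.roots.map φ).sum - ((B n).charpoly.roots.map φ).sum))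
      =o[atTop] (fun n : ℕ => (n : ℝ)) := by
  rw [Asymptotics.isLittleO_iff]
  intro c hc
  have hc3 : 0 < c / 3 := by linarith
  obtain ⟨q, hq⟩ := poly_approx hM φ U hU hUM hφ hc3
  set K : ℝ := max M 1 with hKdef
  have hK1 : 1 ≤ K := le_max_right _ _
  set Kq : ℝ := ∑ i ∈ Finset.range (q.natDegree + 1), ‖q.coeff i‖ * i * K ^ i with hKq
  have hKq0 : 0 ≤ Kq := Finset.sum_nonneg fun i _ => by positivity
  have hc' : 0 < c / (3 * (Kq + 1)) := by positivity
  have hev := (Asymptotics.isLittleO_iff.mp htr) hc'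
  filter_upwards [hev] with n hn
  -- approximation bound, for a single matrix
  have hT : ∀ X : Matrix (Fin n) (Fin n) ℂ, specNorm X ≤ M →
      ‖((X.charpoly.roots.map φ).sum
        - (X.charpoly.roots.map (fun μ => q.eval μ)).sum)‖ ≤ (n : ℝ) * (c / 3) := by
    intro X hX
    rw [← Multiset.sum_map_sub]
    refine (norm_multiset_sum_le _).trans ?_
    rw [Multiset.map_map]
    have hcard : Multiset.card (Multiset.map
        ((fun x => ‖x‖) ∘ fun i => φ i - q.eval i) X.charpoly.roots) = n := by
      rw [Multiset.card_map, card_roots_charpoly]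
    calc (Multiset.map ((fun x => ‖x‖) ∘ fun i => φ i - q.eval i) X.charpoly.roots).sum
        ≤ (Multiset.card (Multiset.map ((fun x => ‖x‖) ∘ fun i => φ i - q.eval i)
            X.charpoly.roots)) • (c / 3) := by
          refine Multiset.sum_le_card_nsmul _ _ ?_
          intro x hx
          rw [Multiset.mem_map] at hx
          obtain ⟨μ, hμ, rfl⟩ := hx
          have hμM : μ ∈ Metric.closedBall (0 : ℂ) M := by
            rw [Metric.mem_closedBall, dist_zero_right]
            exact (root_norm_le X hμ).trans hX
          exact (hq μ hμM).trans_eq rfl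
      _ = (n : ℝ) * (c / 3) := by rw [hcard, nsmul_eq_mul]
  -- middle bound
  have hmid : ‖(((A n).charpoly.roots.map (fun μ => q.eval μ)).sum
      - ((B n).charpoly.roots.map (fun μ => q.eval μ)).sum)‖ ≤ (c / 3) * n := by
    rw [sum_eval_roots, sum_eval_roots]
    have h1 := trace_aeval_sub_le (A n) (B n) hK1
      ((hA n).trans (le_max_left M 1)) ((hB n).trans (le_max_left M 1)) q
    rw [← hKq] at h1
    refine h1.trans ?_
    have htn : traceNorm (A n - B n) ≤ (c / (3 * (Kq + 1))) * n := by
      have h2 := hn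
      rw [Real.norm_of_nonneg (traceNorm_nonneg _), Real.norm_natCast] at h2
      exact h2
    have hfac : Kq * (c / (3 * (Kq + 1))) ≤ c / 3 := by
      rw [show Kq * (c / (3 * (Kq + 1))) = Kq * c / (3 * (Kq + 1)) from
        (mul_div_assoc _ _ _).symm]
      rw [div_le_div_iff₀ (by positivity) (by norm_num)]
      nlinarith
    calc Kq * traceNorm (A n - B n) ≤ Kq * ((c / (3 * (Kq + 1))) * n) :=
          mul_le_mul_of_nonneg_left htn hKq0
      _ = (Kq * (c / (3 * (Kq + 1)))) * n := by ring
      _ ≤ (c / 3) * n := mul_le_mul_of_nonneg_right hfac (Nat.cast_nonneg n)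
  -- combine
  have hsplit : ((A n).charpoly.roots.map φ).sum - ((B n).charpoly.roots.map φ).sum
      = (((A n).charpoly.roots.map φ).sum - ((A n).charpoly.roots.map (fun μ => q.eval μ)).sum)
        + ((((A n).charpoly.roots.map (fun μ => q.eval μ)).sum
            - ((B n).charpoly.roots.map (fun μ => q.eval μ)).sum))
        + ((((B n).charpoly.roots.map (fun μ => q.eval μ)).sum
            - ((B n).charpoly.roots.map φ).sum)) := by
    ring
  rw [hsplit]
  have hTB : ‖(((B n).charpoly.roots.map (fun μ => q.eval μ)).sum
      - ((B n).charpoly.roots.map φ).sum)‖ ≤ (n : ℝ) * (c / 3) := by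
    rw [norm_sub_rev]
    exact hT (B n) (hB n)
  refine le_trans (norm_add_le _ _) ?_
  refine le_trans (add_le_add (le_trans (norm_add_le _ _)
    (add_le_add (hT (A n) (hA n)) hmid)) hTB) ?_
  rw [Real.norm_natCast]
  ring_nf
  exact le_refl _
end
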